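/- arXiv:1904.06720 — 5 statements merged into one kernel-verified Lean document; each statement's English description precedes it below -/
import Mathlib

section
/- If π is a torsion-free group in which the centralizer of every nontrivial element is infinite cyclic, then for every nontrivial a ∈ π and every nonzero integer k, Z(a) = Z(a^k). -/
/-- The December 2024 Mathlib definition of `Monoid.IsTorsionFree` (removed since). -/
def Monoid.IsTorsionFree (G : Type*) [Monoid G] : Prop :=
  ∀ g : G, g ≠ 1 → ¬IsOfFinOrder g

theorem centralizer_eq_centralizer_zpow {π : Type*} [Group π]
    (hTF : Monoid.IsTorsionFree π)
    (hcyc : ∀ g : π, g ≠ 1 → ∃ t : π, Subgroup.centralizer {g} = Subgroup.zpowers t)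
    (a : π) (ha : a ≠ 1) (k : ℤ) (hk : k ≠ 0) :
    Subgroup.centralizer {a} = Subgroup.centralizer {a ^ k} := by
  have hak : a ^ k ≠ 1 := by
    intro h
    exact hTF a ha (isOfFinOrder_iff_zpow_eq_one.2 ⟨k, hk, h⟩)
  obtain ⟨t, ht⟩ := hcyc (a ^ k) hak
  have hmem : a ∈ Subgroup.centralizer {a ^ k} := by
    rw [Subgroup.mem_centralizer_iff]
    rintro g hg
    simp only [Set.mem_singleton_iff] at hg
    subst hg
    exact (Commute.zpow_self a k).eq
  rw [ht] at hmem
  obtain ⟨m, hm⟩ := hmem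
  apply le_antisymm
  · intro x hx
    rw [Subgroup.mem_centralizer_iff] at hx ⊢
    rintro g hg
    simp only [Set.mem_singleton_iff] at hg
    subst hg
    exact ((show Commute a x from hx a rfl).zpow_left k).eq
  · intro x hx
    rw [ht] at hx
    obtain ⟨n, hn⟩ := hx
    rw [Subgroup.mem_centralizer_iff]
    rintro g hg
    simp only [Set.mem_singleton_iff] at hg
    subst hg
    rw [← hm, ← hn]
    exact (Commute.zpow_zpow_self t m n).eq
end

section
/- In a torsion-free group π in which the centralizer of every nontrivial element is infinite cyclic, if x² commutes with a nontrivial element a, then x commutes with a; that is, x² ∈ Z(a) implies x ∈ Z(a). -/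
theorem sq_mem_centralizer_imp_mem {π : Type*} [Group π]
    (hTF : Monoid.IsTorsionFree π)
    (hcyc : ∀ g : π, g ≠ 1 → ∃ t : π, Subgroup.centralizer {g} = Subgroup.zpowers t)
    (a x : π) (ha : a ≠ 1) (hx : x ^ 2 ∈ Subgroup.centralizer {a}) :
    x ∈ Subgroup.centralizer {a} := by
  by_cases h2 : x ^ 2 = 1
  · have hx1 : x = 1 := by
      by_contra hx1
      exact hTF x hx1 (isOfFinOrder_iff_pow_eq_one.mpr ⟨2, two_pos, h2⟩)
    rw [hx1]; exact Subgroup.one_mem _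
  · obtain ⟨s, hs⟩ := hcyc (x ^ 2) h2
    have hax : a * x ^ 2 = x ^ 2 * a :=
      Subgroup.mem_centralizer_iff.mp hx a (Set.mem_singleton a)
    have haz : a ∈ Subgroup.zpowers s := by
      rw [← hs]
      exact Subgroup.mem_centralizer_iff.mpr (by
        intro g hg
        rw [Set.mem_singleton_iff] at hg
        rw [hg]; exact hax.symm)
    have hxz : x ∈ Subgroup.zpowers s := by
      rw [← hs]
      exact Subgroup.mem_centralizer_iff.mpr (by
        intro g hg
        rw [Set.mem_singleton_iff] at hg
        rw [hg]
        exact (Commute.pow_self x 2).eq)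
    obtain ⟨m, hm⟩ := haz
    obtain ⟨n, hn⟩ := hxz
    refine Subgroup.mem_centralizer_iff.mpr ?_
    intro g hg
    rw [Set.mem_singleton_iff] at hg
    rw [hg, ← hm, ← hn]
    exact (Commute.zpow_zpow (Commute.refl s) m n)
end

section
/- Let π be a torsion-free group with all centralizers of nontrivial elements infinite cyclic, and for γ, b ∈ π with b ≠ e set H_{γ,b} = (γ,e) Δ(Z(b)) (γ⁻¹,e) ≤ π × π. Then for any γ, α ∈ π and nontrivial b, c ∈ π, either H_{γ,b} = H_{α,c} or H_{γ,b} ∩ H_{α,c} is the trivial subgroup. -/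
/-- The diagonal homomorphism `π → π × π`. -/
def diagHom (π : Type*) [Group π] : π →* π × π :=
  (MonoidHom.id π).prod (MonoidHom.id π)

/-- The conjugate `g S g⁻¹` of a subgroup `S` by an element `g`. -/
def conjSub {G : Type*} [Group G] (g : G) (S : Subgroup G) : Subgroup G :=
  S.map (MulAut.conj g).toMonoidHom

/-- The subgroup `H_{γ,b} = (γ,e) Δ(Z(b)) (γ⁻¹,e)` of `π × π`. -/
def Hsub {π : Type*} [Group π] (γ b : π) : Subgroup (π × π) :=
  conjSub ((γ, (1 : π)) : π × π) ((Subgroup.centralizer {b}).map (diagHom π))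

lemma mem_Hsub {π : Type*} [Group π] (γ b : π) (p : π × π) :
    p ∈ Hsub γ b ↔ ∃ z ∈ Subgroup.centralizer ({b} : Set π),
      p = (γ * z * γ⁻¹, z) := by
  simp only [Hsub, conjSub, Subgroup.mem_map, MulEquiv.coe_toMonoidHom,
    MulAut.conj_apply, diagHom, MonoidHom.prod_apply, MonoidHom.id_apply]
  constructor
  · rintro ⟨q, ⟨z, hz, rfl⟩, rfl⟩
    exact ⟨z, hz, by simp [Prod.ext_iff, mul_assoc]⟩
  · rintro ⟨z, hz, rfl⟩
    exact ⟨(z, z), ⟨z, hz, rfl⟩, by simp [Prod.ext_iff, mul_assoc]⟩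

lemma centralizer_comm {π : Type*} [Group π]
    (hcyc : ∀ g : π, g ≠ 1 → ∃ t : π, Subgroup.centralizer {g} = Subgroup.zpowers t)
    {a : π} (ha : a ≠ 1) {g h : π}
    (hg : g ∈ Subgroup.centralizer ({a} : Set π))
    (hh : h ∈ Subgroup.centralizer ({a} : Set π)) : g * h = h * g := by
  obtain ⟨t, ht⟩ := hcyc a ha
  rw [ht] at hg hh
  obtain ⟨m, rfl⟩ := hg
  obtain ⟨n, rfl⟩ := hh
  rw [← zpow_add, ← zpow_add, add_comm]

lemma centralizer_eq_of_mem {π : Type*} [Group π]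
    (hcyc : ∀ g : π, g ≠ 1 → ∃ t : π, Subgroup.centralizer {g} = Subgroup.zpowers t)
    {a z : π} (ha : a ≠ 1) (hz : z ≠ 1)
    (hmem : z ∈ Subgroup.centralizer ({a} : Set π)) :
    Subgroup.centralizer ({a} : Set π) = Subgroup.centralizer ({z} : Set π) := by
  have hbz : a ∈ Subgroup.centralizer ({z} : Set π) := by
    rw [Subgroup.mem_centralizer_iff]
    rintro h rfl
    exact (hmem a rfl).symm
  ext g
  constructor
  · intro hg
    rw [Subgroup.mem_centralizer_iff]
    rintro h rfl
    exact centralizer_comm hcyc ha hmem hg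
  · intro hg
    rw [Subgroup.mem_centralizer_iff]
    rintro h rfl
    exact centralizer_comm hcyc hz hbz hg

theorem Hsub_eq_or_inter_trivial {π : Type*} [Group π]
    (hTF : Monoid.IsTorsionFree π)
    (hcyc : ∀ g : π, g ≠ 1 → ∃ t : π, Subgroup.centralizer {g} = Subgroup.zpowers t)
    (γ α b c : π) (hb : b ≠ 1) (hc : c ≠ 1) :
    Hsub γ b = Hsub α c ∨ Hsub γ b ⊓ Hsub α c = ⊥ := by
  rw [or_iff_not_imp_right]
  intro hne
  -- get a nontrivial common element
  obtain ⟨p, hp, hp1⟩ : ∃ p ∈ Hsub γ b ⊓ Hsub α c, p ≠ 1 := by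
    by_contra h
    push_neg at h
    exact hne ((Subgroup.eq_bot_iff_forall _).2 h)
  obtain ⟨hpb, hpc⟩ := hp
  obtain ⟨z, hz, hpz⟩ := (mem_Hsub γ b p).1 hpb
  obtain ⟨w, hw, hpw⟩ := (mem_Hsub α c p).1 hpc
  have hzw : z = w := by
    have := congrArg Prod.snd (hpz ▸ hpw)
    simpa using this
  subst hzw
  have hz1 : z ≠ 1 := by
    rintro rfl
    apply hp1
    rw [hpz]
    simp [Prod.ext_iff]
  -- centralizers coincide
  have hZb := centralizer_eq_of_mem hcyc hb hz1 hz
  have hZc := centralizer_eq_of_mem hcyc hc hz1 hw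
  have hZbc : Subgroup.centralizer ({b} : Set π) = Subgroup.centralizer ({c} : Set π) :=
    hZb.trans hZc.symm
  -- first coordinates agree: α⁻¹ * γ ∈ Z(z)
  have hx : γ * z * γ⁻¹ = α * z * α⁻¹ := by
    have := congrArg Prod.fst (hpz ▸ hpw)
    simpa using this
  have hu : (α⁻¹ * γ) ∈ Subgroup.centralizer ({b} : Set π) := by
    rw [hZb, Subgroup.mem_centralizer_iff]
    intro h hh
    rw [Set.mem_singleton_iff] at hh
    rw [hh]
    -- need h * (α⁻¹ * γ) = (α⁻¹ * γ) * h, h = z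
    have : z * (α⁻¹ * γ) = α⁻¹ * (α * z * α⁻¹) * γ := by group
    rw [this, ← hx]; group
  ext p'
  rw [mem_Hsub, mem_Hsub, ← hZbc]
  constructor
  · rintro ⟨z', hz', rfl⟩
    refine ⟨z', hz', ?_⟩
    have hcz : (α⁻¹ * γ) * z' = z' * (α⁻¹ * γ) := centralizer_comm hcyc hb hu hz'
    simp only [Prod.mk.injEq, and_true]
    calc γ * z' * γ⁻¹ = α * ((α⁻¹ * γ) * z') * γ⁻¹ := by group
      _ = α * (z' * (α⁻¹ * γ)) * γ⁻¹ := by rw [hcz]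
      _ = α * z' * α⁻¹ := by group
  · rintro ⟨z', hz', rfl⟩
    refine ⟨z', hz', ?_⟩
    have hcz : (α⁻¹ * γ) * z' = z' * (α⁻¹ * γ) := centralizer_comm hcyc hb hu hz'
    simp only [Prod.mk.injEq, and_true]
    symm
    calc γ * z' * γ⁻¹ = α * ((α⁻¹ * γ) * z') * γ⁻¹ := by group
      _ = α * (z' * (α⁻¹ * γ)) * γ⁻¹ := by rw [hcz]
      _ = α * z' * α⁻¹ := by group
end

section
/- Let π be a torsion-free group with all centralizers of nontrivial elements infinite cyclic, and let a, b be nontrivial elements. If (x, y) Δ(Z(a)) (x, y)⁻¹ = Δ(Z(b)) for some x, y ∈ π, then a and b are weakly conjugate, i.e. there exist nonzero integers k, ℓ and z ∈ π with a^k = z b^ℓ z⁻¹. -/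
/-- Weak conjugacy: `a ~ b` iff some nonzero powers `a^k` and `b^ℓ` are conjugate. -/
def WeaklyConjugate {π : Type*} [Group π] (a b : π) : Prop :=
  ∃ k ℓ : ℤ, k ≠ 0 ∧ ℓ ≠ 0 ∧ ∃ x : π, a ^ k = x * b ^ ℓ * x⁻¹

theorem weaklyConjugate_of_conj_diag_centralizer_eq {π : Type*} [Group π]
    (hTF : Monoid.IsTorsionFree π)
    (hcyc : ∀ g : π, g ≠ 1 → ∃ t : π, Subgroup.centralizer {g} = Subgroup.zpowers t)
    (a b : π) (ha : a ≠ 1) (hb : b ≠ 1) (x y : π)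
    (h : conjSub ((x, y) : π × π) ((Subgroup.centralizer {a}).map (diagHom π)) =
      (Subgroup.centralizer {b}).map (diagHom π)) :
    WeaklyConjugate a b := by
  -- a ∈ Z(a)
  have haZ : a ∈ Subgroup.centralizer ({a} : Set π) := by
    rw [Subgroup.mem_centralizer_iff]
    rintro g rfl; rfl
  -- the conjugate of the diagonal of a lies in the RHS
  have hmem : ((x * a * x⁻¹, y * a * y⁻¹) : π × π) ∈
      (Subgroup.centralizer ({b} : Set π)).map (diagHom π) := by
    rw [← h]
    exact ⟨(a, a), Subgroup.mem_map.mpr ⟨a, haZ, rfl⟩, rfl⟩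
  obtain ⟨g, hgZ, hg⟩ := Subgroup.mem_map.mp hmem
  have hgx : g = x * a * x⁻¹ := congrArg Prod.fst hg
  subst hgx
  obtain ⟨t, ht⟩ := hcyc b hb
  rw [ht] at hgZ
  obtain ⟨m, hm⟩ := hgZ
  have hbZ : b ∈ Subgroup.centralizer ({b} : Set π) := by
    rw [Subgroup.mem_centralizer_iff]
    rintro g rfl; rfl
  rw [ht] at hbZ
  obtain ⟨n, hn⟩ := hbZ
  have hn0 : n ≠ 0 := by
    rintro rfl; exact hb (by simpa using hn.symm)
  have hm0 : m ≠ 0 := by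
    rintro rfl
    apply ha
    have : x * a * x⁻¹ = 1 := by simpa using hm.symm
    have := congrArg (fun w => x⁻¹ * w * x) this
    simpa [mul_assoc] using this
  refine ⟨n, m, hn0, hm0, x⁻¹, ?_⟩
  have key : x * a ^ n * x⁻¹ = b ^ m := by
    have h1 : (x * a * x⁻¹) ^ n = t ^ (m * n) := by
      rw [← hm, ← zpow_mul]
    have h2 : b ^ m = t ^ (m * n) := by rw [← hn, ← zpow_mul, mul_comm]
    calc x * a ^ n * x⁻¹ = (x * a * x⁻¹) ^ n := by
          rw [conj_zpow]
      _ = b ^ m := by rw [h1, h2]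
  have := congrArg (fun w => x⁻¹ * w * x) key
  simpa [mul_assoc] using this
end

section
/- Let π be a torsion-free group in which all centralizers of nontrivial elements are infinite cyclic, and let a ∈ π be nontrivial. Then the stabilizer in π × π of the unordered pair {v, v_a} of cosets of the diagonal (v = Δ(π), v_a = (a, e)Δ(π)) is exactly Δ(Z(a)): an element (x, y) stabilizes the pair if and only if x = y and x ∈ Z(a). -/
/-- The coset `v_γ = (γ, e)Δ(π)` of the diagonal subgroup. -/
def cosetV {π : Type*} [Group π] (γ : π) : (π × π) ⧸ (diagHom π).range :=
  QuotientGroup.mk ((γ, (1 : π)) : π × π)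

lemma smul_cosetV_eq {π : Type*} [Group π] (x y γ δ : π) :
    ((x, y) : π × π) • cosetV γ = cosetV δ ↔ x * γ * y⁻¹ = δ := by
  unfold cosetV
  rw [MulAction.Quotient.smul_mk, QuotientGroup.eq]
  constructor
  · rintro ⟨g, hg⟩
    rw [Prod.ext_iff] at hg
    obtain ⟨hg1, hg2⟩ := hg
    simp [diagHom] at hg1 hg2
    rw [hg2] at hg1
    rw [hg1]; group
  · intro h
    refine ⟨y⁻¹, ?_⟩
    simp [diagHom, Prod.ext_iff, ← h, mul_assoc]

theorem stabilizer_pair_eq_diag_centralizer {π : Type*} [Group π]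
    (hTF : ∀ g : π, g ≠ 1 → ¬IsOfFinOrder g)
    (hcyc : ∀ g : π, g ≠ 1 → ∃ t : π, Subgroup.centralizer {g} = Subgroup.zpowers t)
    (a : π) (ha : a ≠ 1) (x y : π) :
    ((((x, y) : π × π) • cosetV (1 : π) = cosetV (1 : π) ∧
        ((x, y) : π × π) • cosetV a = cosetV a) ∨
      (((x, y) : π × π) • cosetV (1 : π) = cosetV a ∧
        ((x, y) : π × π) • cosetV a = cosetV (1 : π))) ↔
      (x = y ∧ x ∈ Subgroup.centralizer {a}) := by
  simp only [smul_cosetV_eq, Subgroup.mem_centralizer_singleton_iff]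
  have sq_ne : ∀ g : π, g ≠ 1 → g * g ≠ 1 := by
    intro g hg h
    exact hTF g hg (isOfFinOrder_iff_pow_eq_one.mpr ⟨2, by norm_num, by rwa [pow_two]⟩)
  constructor
  · rintro (⟨h1, h2⟩ | ⟨h1, h2⟩)
    · have hxy : x = y := by
        rw [mul_one, mul_inv_eq_one] at h1; exact h1
      subst hxy
      refine ⟨rfl, ?_⟩
      calc x * a = (x * a * x⁻¹) * x := by group
        _ = a * x := by rw [h2]
    · -- h1 : x * 1 * y⁻¹ = a, h2 : x * a * y⁻¹ = 1
      exfalso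
      have hy : y = x * a := by
        rw [mul_inv_eq_one] at h2; exact h2.symm
      subst hy
      have h1' : x * (a⁻¹ * x⁻¹) = a := by
        simpa [mul_inv_rev, mul_assoc] using h1
      have hxa2 : x * a⁻¹ = a * x := by
        have := congrArg (· * x) h1'
        simpa [mul_assoc] using this
      have hxa1 : x * a = a⁻¹ * x := by
        have := congrArg (fun z => a⁻¹ * z * a) hxa2
        simp only [mul_assoc, inv_mul_cancel_left, inv_mul_cancel, mul_one] at this
        exact this.symm
      -- x² commutes with a
      have hx2 : (x * x) * a = a * (x * x) := by
        calc (x * x) * a = x * (x * a) := by rw [mul_assoc]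
          _ = x * (a⁻¹ * x) := by rw [hxa1]
          _ = (x * a⁻¹) * x := by rw [mul_assoc]
          _ = (a * x) * x := by rw [hxa2]
          _ = a * (x * x) := by rw [mul_assoc]
      have hxne : x ≠ 1 := by
        intro hx; subst hx
        have haa : a = a⁻¹ := by simpa using hxa1
        apply sq_ne a ha
        nth_rewrite 2 [haa]
        group
      have hx2ne : x * x ≠ 1 := sq_ne x hxne
      obtain ⟨t, ht⟩ := hcyc a ha
      have hat : a ∈ Subgroup.zpowers t := by
        rw [← ht]; exact Subgroup.mem_centralizer_singleton_iff.mpr rfl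
      have hx2t : x * x ∈ Subgroup.zpowers t := by
        rw [← ht]; exact Subgroup.mem_centralizer_singleton_iff.mpr hx2
      obtain ⟨m, hm⟩ := hat
      obtain ⟨n, hn⟩ := hx2t
      have hm' : t ^ m = a := hm
      obtain ⟨s, hs⟩ := hcyc (x * x) hx2ne
      have hxs : x ∈ Subgroup.zpowers s := by
        rw [← hs]
        exact Subgroup.mem_centralizer_singleton_iff.mpr (by group)
      have hts : t ∈ Subgroup.zpowers s := by
        rw [← hs]
        refine Subgroup.mem_centralizer_singleton_iff.mpr ?_
        have hn' : t ^ n = x * x := hn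
        rw [← hn', ← zpow_one_add, ← zpow_add_one, add_comm]
      obtain ⟨p, hp⟩ := hxs
      obtain ⟨q, hq⟩ := hts
      have hp' : s ^ p = x := hp
      have hq' : s ^ q = t := hq
      have haS : s ^ (q * m) = a := by rw [zpow_mul, hq', hm']
      have hxa : x * a = a * x := by
        rw [← hp', ← haS, ← zpow_add, ← zpow_add, add_comm]
      have haa : a = a⁻¹ := by
        have : a * x = a⁻¹ * x := by rw [← hxa, hxa1]
        exact mul_right_cancel this
      apply sq_ne a ha
      nth_rewrite 2 [haa]
      group
  · rintro ⟨rfl, hc⟩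
    left
    refine ⟨by group, ?_⟩
    calc x * a * x⁻¹ = (a * x) * x⁻¹ := by rw [hc]
      _ = a := by group
end
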